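/- Let d > 0, r > 0, a ∈ (0,1), b > 1, and let c ≥ c_LLW. Let φ, ψ : ℝ → [0,1] be C² functions satisfying φ''(ξ) + c·φ'(ξ) + φ(ξ)(1 − φ(ξ) − a·ψ(ξ)) = 0 and d·ψ''(ξ) + c·ψ'(ξ) + r·ψ(ξ)(1 − ψ(ξ) − b·φ(ξ)) = 0 for all ξ ∈ ℝ, with φ(ξ) → 1 and ψ(ξ) → 0 as ξ → −∞, and φ(ξ) → 0 and ψ(ξ) → 1 as ξ → +∞. Then (φ, ψ) is componentwise strictly monotonic: for all ξ₁ < ξ₂ one has φ(ξ₁) > φ(ξ₂) and ψ(ξ₁) < ψ(ξ₂). -/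

import Mathlib

open Real Filter Set

noncomputable section

set_option maxHeartbeats 1000000

/-- Existence of a componentwise strictly monotone traveling-wave profile `(φ, ψ)`
of speed `c` connecting `(1,0)` (at `-∞`) to `(0,1)` (at `+∞`):
`φ'' + cφ' + φ(1 - φ - aψ) = 0`, `dψ'' + cψ' + rψ(1 - ψ - bφ) = 0`. -/
def IsTW (d r a b c : ℝ) : Prop :=
  ∃ φ ψ : ℝ → ℝ,
    ContDiff ℝ 2 φ ∧ ContDiff ℝ 2 ψ ∧
    (∀ ξ, φ ξ ∈ Set.Icc (0:ℝ) 1) ∧ (∀ ξ, ψ ξ ∈ Set.Icc (0:ℝ) 1) ∧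
    StrictAnti φ ∧ StrictMono ψ ∧
    (∀ ξ, deriv (deriv φ) ξ + c * deriv φ ξ + φ ξ * (1 - φ ξ - a * ψ ξ) = 0) ∧
    (∀ ξ, d * deriv (deriv ψ) ξ + c * deriv ψ ξ + r * ψ ξ * (1 - ψ ξ - b * φ ξ) = 0) ∧
    Tendsto φ atBot (nhds 1) ∧ Tendsto ψ atBot (nhds 0) ∧
    Tendsto φ atTop (nhds 0) ∧ Tendsto ψ atTop (nhds 1)

/-- The Lewis–Li–Weinberger spreading speed: the infimum of the speeds of
componentwise monotone traveling waves connecting `(1,0)` to `(0,1)`. -/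
def cLLW (d r a b : ℝ) : ℝ := sInf {c : ℝ | IsTW d r a b c}

namespace ProfileMonotoneAux

open Topology

/-! ### Extraction of interior local extrema on half-lines -/

lemma exists_localMax_left {f : ℝ → ℝ} (hf : Continuous f) {L x y : ℝ}
    (hxy : x < y) (hL : Tendsto f atBot (nhds L)) (hLx : L < f x) (hyx : f y < f x) :
    ∃ z, z < y ∧ IsLocalMax f z ∧ f x ≤ f z := by
  obtain ⟨R, hR⟩ := eventually_atBot.mp (hL.eventually_lt_const hLx)
  have hxmem : x ∈ Icc (min R x) y := ⟨min_le_right _ _, hxy.le⟩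
  obtain ⟨z, hz, hmax⟩ := isCompact_Icc.exists_isMaxOn ⟨x, hxmem⟩ hf.continuousOn
  have hfxz : f x ≤ f z := hmax hxmem
  have hmax' : ∀ t ≤ y, f t ≤ f z := by
    intro t ht
    by_cases h : min R x ≤ t
    · exact hmax ⟨h, ht⟩
    · exact le_trans (hR t ((not_le.mp h).le.trans (min_le_left _ _))).le hfxz
  have hzy : z < y := lt_of_le_of_ne hz.2 (by rintro rfl; linarith)
  exact ⟨z, hzy, (isMaxOn_iff.mpr fun t ht => hmax' t ht).isLocalMax (Iic_mem_nhds hzy), hfxz⟩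

lemma exists_localMin_left {f : ℝ → ℝ} (hf : Continuous f) {L x y : ℝ}
    (hxy : x < y) (hL : Tendsto f atBot (nhds L)) (hLx : f x < L) (hyx : f x < f y) :
    ∃ z, z < y ∧ IsLocalMin f z ∧ f z ≤ f x := by
  obtain ⟨z, hzy, hz, hz'⟩ := exists_localMax_left (f := fun t => -f t) (hf.neg) hxy
    (hL.neg) (by simpa using hLx) (by simpa using hyx)
  exact ⟨z, hzy, by simpa using hz.neg, by simpa using hz'⟩

lemma exists_localMin_right {f : ℝ → ℝ} (hf : Continuous f) {L z y : ℝ}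
    (hzy : z < y) (hL : Tendsto f atTop (nhds L)) (hLy : f y < L) (hyz : f y < f z) :
    ∃ w, z < w ∧ IsLocalMin f w ∧ f w ≤ f y := by
  obtain ⟨R, hR⟩ := eventually_atTop.mp (hL.eventually_const_lt hLy)
  have hymem : y ∈ Icc z (max R y) := ⟨hzy.le, le_max_right _ _⟩
  obtain ⟨w, hw, hmin⟩ := isCompact_Icc.exists_isMinOn ⟨y, hymem⟩ hf.continuousOn
  have hfyw : f w ≤ f y := hmin hymem
  have hmin' : ∀ t, z ≤ t → f w ≤ f t := by
    intro t ht
    by_cases h : t ≤ max R y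
    · exact hmin ⟨ht, h⟩
    · exact hfyw.trans (hR t ((le_max_left _ _).trans (not_le.mp h).le)).le
  have hzw : z < w := lt_of_le_of_ne hw.1 (by rintro rfl; linarith)
  exact ⟨w, hzw, (isMinOn_iff.mpr fun t ht => hmin' t ht).isLocalMin (Ici_mem_nhds hzw), hfyw⟩

lemma exists_localMax_right {f : ℝ → ℝ} (hf : Continuous f) {L z y : ℝ}
    (hzy : z < y) (hL : Tendsto f atTop (nhds L)) (hLy : L < f y) (hyz : f z < f y) :
    ∃ w, z < w ∧ IsLocalMax f w ∧ f y ≤ f w := by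
  obtain ⟨w, hzw, hw, hw'⟩ := exists_localMin_right (f := fun t => -f t) (hf.neg) hzy
    (hL.neg) (by simpa using hLy) (by simpa using hyz)
  exact ⟨w, hzw, by simpa using hw.neg, by simpa using hw'⟩

/-! ### Second derivative test -/

lemma deriv_differentiable_of_contDiff_two {u : ℝ → ℝ} (hu : ContDiff ℝ 2 u) :
    Differentiable ℝ (deriv u) := by
  have h2 : (2 : WithTop ℕ∞) = 1 + 1 := by norm_num
  rw [h2, contDiff_succ_iff_deriv] at hu
  exact hu.2.2.differentiable one_ne_zero

lemma secondDeriv_nonpos_of_isLocalMax {u : ℝ → ℝ} (hu : ContDiff ℝ 2 u) {z : ℝ}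
    (h : IsLocalMax u z) : deriv (deriv u) z ≤ 0 := by
  by_contra hD
  push_neg at hD
  have hd1 : Differentiable ℝ (deriv u) := deriv_differentiable_of_contDiff_two hu
  have h' : deriv u z = 0 := h.deriv_eq_zero
  have hDa : HasDerivAt (deriv u) (deriv (deriv u) z) z := (hd1 z).hasDerivAt
  rw [hasDerivAt_iff_tendsto_slope] at hDa
  have hev : ∀ᶠ t in 𝓝[≠] z, 0 < slope (deriv u) z t :=
    hDa.eventually (eventually_gt_nhds hD)
  rw [eventually_nhdsWithin_iff] at hev
  obtain ⟨ε₁, hε₁, h₁⟩ := Metric.eventually_nhds_iff.mp hev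
  obtain ⟨ε₂, hε₂, h₂⟩ := Metric.eventually_nhds_iff.mp h
  set ε := min ε₁ ε₂ / 2 with hε
  have hεpos : 0 < ε := by positivity
  have hderivpos : ∀ t ∈ Ioo z (z + ε), 0 < deriv u t := by
    intro t ht
    have htz : t ≠ z := ne_of_gt ht.1
    have hdist : dist t z < ε₁ := by
      rw [Real.dist_eq, abs_of_pos (by linarith [ht.1] : (0:ℝ) < t - z)]
      have : ε ≤ ε₁ := le_trans (half_le_self (le_min hε₁.le hε₂.le)) (min_le_left _ _)
      linarith [ht.2]
    have := h₁ hdist htz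
    rw [slope_def_field, h'] at this
    have h3 : 0 < t - z := by linarith [ht.1]
    have := mul_pos this h3
    rw [div_mul_cancel₀] at this
    · linarith
    · exact ne_of_gt h3
  have hmono : StrictMonoOn u (Icc z (z + ε)) := by
    apply strictMonoOn_of_deriv_pos (convex_Icc _ _) (hu.continuous.continuousOn)
    intro t ht
    rw [interior_Icc] at ht
    exact hderivpos t ht
  have hlt : u z < u (z + ε) :=
    hmono ⟨le_rfl, by linarith⟩ ⟨by linarith, le_rfl⟩ (by linarith)
  have : u (z + ε) ≤ u z := by
    apply h₂
    rw [Real.dist_eq]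
    rw [abs_of_pos (by linarith : (0:ℝ) < z + ε - z)]
    have hlt2 : ε < ε₂ :=
      lt_of_lt_of_le (by linarith [lt_min hε₁ hε₂] : ε < min ε₁ ε₂) (min_le_right _ _)
    linarith
  linarith

lemma secondDeriv_nonneg_of_isLocalMin {u : ℝ → ℝ} (hu : ContDiff ℝ 2 u) {z : ℝ}
    (h : IsLocalMin u z) : 0 ≤ deriv (deriv u) z := by
  have hneg := secondDeriv_nonpos_of_isLocalMax (u := fun t => -u t) hu.neg h.neg
  have e1 : deriv (fun t => -u t) = fun t => -deriv u t := by
    funext t; exact deriv.neg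
  rw [e1] at hneg
  have e2 : deriv (fun t => -deriv u t) z = -deriv (deriv u) z := deriv.neg
  rw [e2] at hneg
  linarith

/-! ### A Grönwall-type vanishing lemma -/

lemma vanish_forward {e cc G : ℝ} (he : 0 < e) {u g : ℝ → ℝ} (hu : ContDiff ℝ 2 u)
    (hode : ∀ t, e * deriv (deriv u) t + cc * deriv u t + u t * g t = 0)
    (hg : ∀ t, |g t| ≤ G) {x0 : ℝ} (h0 : u x0 = 0) (h0' : deriv u x0 = 0) :
    ∀ t, x0 ≤ t → u t = 0 := by
  have hud : Differentiable ℝ u := hu.differentiable (by norm_num)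
  have hud2 : Differentiable ℝ (deriv u) := deriv_differentiable_of_contDiff_two hu
  set z : ℝ → ℝ × ℝ := fun t => (u t, deriv u t) with hz
  obtain ⟨K, hK⟩ : ∃ K : ℝ, K = 1 + (|cc| + G) / e := ⟨_, rfl⟩
  have hG0 : 0 ≤ G := le_trans (abs_nonneg _) (hg x0)
  have hK1 : 1 ≤ K := by
    rw [hK]
    have : 0 ≤ (|cc| + G) / e := div_nonneg (by positivity) he.le
    linarith
  have hzc : Continuous z := (hud.continuous).prodMk (hud2.continuous)
  have hzd : ∀ t, HasDerivAt z (deriv u t, deriv (deriv u) t) t := fun t =>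
    HasDerivAt.prodMk (hud t).hasDerivAt (hud2 t).hasDerivAt
  have hbound : ∀ t, ‖(deriv u t, deriv (deriv u) t)‖ ≤ K * ‖z t‖ + 0 := by
    intro t
    have hm : ‖z t‖ = max |u t| |deriv u t| := by
      rw [Prod.norm_def]; simp [Real.norm_eq_abs, hz]
    have hm2 : ‖(deriv u t, deriv (deriv u) t)‖ = max |deriv u t| |deriv (deriv u) t| := by
      rw [Prod.norm_def]; simp [Real.norm_eq_abs]
    rw [hm, hm2, add_zero]
    have habs1 : |u t| ≤ max |u t| |deriv u t| := le_max_left _ _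
    have habs2 : |deriv u t| ≤ max |u t| |deriv u t| := le_max_right _ _
    have h2 : |deriv (deriv u) t| ≤ (|cc| + G) / e * max |u t| |deriv u t| := by
      have heq : deriv (deriv u) t = -(cc * deriv u t + u t * g t) / e := by
        field_simp
        linarith [hode t]
      rw [heq, abs_div, abs_of_pos he, div_le_iff₀ he]
      have habs : |(-(cc * deriv u t + u t * g t))| ≤ |cc| * |deriv u t| + G * |u t| := by
        rw [abs_neg]
        calc |cc * deriv u t + u t * g t| ≤ |cc * deriv u t| + |u t * g t| := abs_add_le _ _
        _ = |cc| * |deriv u t| + |u t| * |g t| := by rw [abs_mul, abs_mul]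
        _ ≤ |cc| * |deriv u t| + G * |u t| := by
            nlinarith [hg t, abs_nonneg (u t), abs_nonneg (g t)]
      have hmax0 : (0:ℝ) ≤ max |u t| |deriv u t| := le_trans (abs_nonneg _) habs1
      calc |(-(cc * deriv u t + u t * g t))| ≤ |cc| * |deriv u t| + G * |u t| := habs
      _ ≤ |cc| * max |u t| |deriv u t| + G * max |u t| |deriv u t| := by
          nlinarith [abs_nonneg cc]
      _ = (|cc| + G) * max |u t| |deriv u t| := by ring
      _ = (|cc| + G) / e * max |u t| |deriv u t| * e := by field_simp
    have hmax0 : (0:ℝ) ≤ max |u t| |deriv u t| := le_trans (abs_nonneg _) habs1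
    have hKm : K * max |u t| |deriv u t|
        = max |u t| |deriv u t| + (|cc| + G) / e * max |u t| |deriv u t| := by
      rw [hK]; ring
    apply max_le
    · have : 0 ≤ (|cc| + G) / e * max |u t| |deriv u t| :=
        mul_nonneg (div_nonneg (by positivity) he.le) hmax0
      linarith
    · linarith
  intro t ht
  have key : ∀ x ∈ Icc x0 t, ‖z x‖ ≤ gronwallBound 0 K 0 (x - x0) := by
    apply norm_le_gronwallBound_of_norm_deriv_right_le hzc.continuousOn
    · intro s _
      exact (hzd s).hasDerivWithinAt
    · rw [hz]; simp [Prod.norm_def, h0, h0']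
    · intro s _
      exact hbound s
  have hzt := key t ⟨ht, le_rfl⟩
  rw [gronwallBound_ε0] at hzt
  simp only [zero_mul] at hzt
  have h1 : |u t| ≤ ‖z t‖ := by
    rw [Prod.norm_def]; simp [Real.norm_eq_abs, le_max_left, hz]
  have h2 : |u t| = 0 := le_antisymm (by linarith) (abs_nonneg _)
  exact abs_eq_zero.mp h2

lemma vanish_backward {e cc G : ℝ} (he : 0 < e) {u g : ℝ → ℝ} (hu : ContDiff ℝ 2 u)
    (hode : ∀ t, e * deriv (deriv u) t + cc * deriv u t + u t * g t = 0)
    (hg : ∀ t, |g t| ≤ G) {x0 : ℝ} (h0 : u x0 = 0) (h0' : deriv u x0 = 0) :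
    ∀ t, t ≤ x0 → u t = 0 := by
  set v : ℝ → ℝ := fun t => u (2 * x0 - t) with hv
  have hvreg : ContDiff ℝ 2 v := hu.comp (contDiff_const.sub contDiff_id)
  have hdv : deriv v = fun t => -deriv u (2 * x0 - t) := by
    funext t; exact deriv_comp_const_sub u (2 * x0) t
  have hddv : ∀ t, deriv (deriv v) t = deriv (deriv u) (2 * x0 - t) := by
    intro t
    rw [hdv]
    have h1 : deriv (fun t => -deriv u (2 * x0 - t)) t
        = -deriv (fun t => deriv u (2 * x0 - t)) t := deriv.neg
    rw [h1, deriv_comp_const_sub (deriv u) (2 * x0) t]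
    ring
  have hvode : ∀ t, e * deriv (deriv v) t + (-cc) * deriv v t
      + v t * g (2 * x0 - t) = 0 := by
    intro t
    rw [hddv, hdv]
    have := hode (2 * x0 - t)
    simp only [hv]
    linarith
  have h0v : v x0 = 0 := by simp only [hv]; norm_num [two_mul]; exact h0
  have h0v' : deriv v x0 = 0 := by
    rw [hdv]; norm_num [two_mul]; simpa [two_mul] using h0'
  have hvan := vanish_forward he hvreg hvode (fun t => hg (2 * x0 - t)) h0v h0v'
  intro t ht
  have hres := hvan (2 * x0 - t) (by linarith)
  simp only [hv] at hres
  have h2 : 2 * x0 - (2 * x0 - t) = t := by ring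
  rwa [h2] at hres

end ProfileMonotoneAux

open ProfileMonotoneAux

/-- Any traveling-wave profile `(φ, ψ)` of speed `c ≥ c_LLW` connecting `(1,0)`
to `(0,1)` is componentwise strictly monotonic. -/
theorem profile_monotone
    (d r a b c : ℝ) (hd : 0 < d) (hr : 0 < r) (ha0 : 0 < a) (ha1 : a < 1) (hb : 1 < b)
    (hc : cLLW d r a b ≤ c)
    (φ ψ : ℝ → ℝ)
    (hφreg : ContDiff ℝ 2 φ) (hψreg : ContDiff ℝ 2 ψ)
    (hφmem : ∀ ξ, φ ξ ∈ Set.Icc (0:ℝ) 1) (hψmem : ∀ ξ, ψ ξ ∈ Set.Icc (0:ℝ) 1)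
    (hφode : ∀ ξ, deriv (deriv φ) ξ + c * deriv φ ξ + φ ξ * (1 - φ ξ - a * ψ ξ) = 0)
    (hψode : ∀ ξ, d * deriv (deriv ψ) ξ + c * deriv ψ ξ + r * ψ ξ * (1 - ψ ξ - b * φ ξ) = 0)
    (hφbot : Tendsto φ atBot (nhds 1)) (hψbot : Tendsto ψ atBot (nhds 0))
    (hφtop : Tendsto φ atTop (nhds 0)) (hψtop : Tendsto ψ atTop (nhds 1)) :
    StrictAnti φ ∧ StrictMono ψ := by
  have hb0 : (0:ℝ) < b := lt_trans one_pos hb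
  have hφd : Differentiable ℝ φ := hφreg.differentiable (by norm_num)
  have hψd : Differentiable ℝ ψ := hψreg.differentiable (by norm_num)
  have hφc : Continuous φ := hφd.continuous
  have hψc : Continuous ψ := hψd.continuous
  have hφ0 : ∀ x, 0 ≤ φ x := fun x => (hφmem x).1
  have hφ1 : ∀ x, φ x ≤ 1 := fun x => (hφmem x).2
  have hψ0 : ∀ x, 0 ≤ ψ x := fun x => (hψmem x).1
  have hψ1 : ∀ x, ψ x ≤ 1 := fun x => (hψmem x).2
  -- ODEs in normalized form
  have hφode' : ∀ t, (1:ℝ) * deriv (deriv φ) t + c * deriv φ t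
      + φ t * (1 - φ t - a * ψ t) = 0 := by intro t; rw [one_mul]; exact hφode t
  have hψode' : ∀ t, d * deriv (deriv ψ) t + c * deriv ψ t
      + ψ t * (r * (1 - ψ t - b * φ t)) = 0 := by
    intro t; have := hψode t; ring_nf; ring_nf at this; linarith
  have hgφ : ∀ t, |1 - φ t - a * ψ t| ≤ 2 + a := by
    intro t
    rw [abs_le]
    constructor <;> nlinarith [hφ0 t, hφ1 t, hψ0 t, hψ1 t]
  have hgψ : ∀ t, |r * (1 - ψ t - b * φ t)| ≤ r * (2 + b) := by
    intro t
    rw [abs_mul, abs_of_pos hr]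
    have : |1 - ψ t - b * φ t| ≤ 2 + b := by
      rw [abs_le]
      constructor <;> nlinarith [hφ0 t, hφ1 t, hψ0 t, hψ1 t]
    nlinarith
  -- positivity
  have hφpos : ∀ x, 0 < φ x := by
    intro x
    rcases lt_or_eq_of_le (hφ0 x) with h | h
    · exact h
    · exfalso
      have hmin : IsLocalMin φ x := Filter.Eventually.of_forall (fun t => by
        rw [← h]; exact hφ0 t)
      have hvan := vanish_backward one_pos hφreg hφode' hgφ h.symm hmin.deriv_eq_zero
      have heq : φ =ᶠ[atBot] (fun _ => (0:ℝ)) :=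
        eventually_atBot.mpr ⟨x, fun t ht => hvan t ht⟩
      have : Tendsto φ atBot (nhds 0) := by
        rw [tendsto_congr' heq]; exact tendsto_const_nhds
      exact one_ne_zero (tendsto_nhds_unique hφbot this)
  have hψpos : ∀ x, 0 < ψ x := by
    intro x
    rcases lt_or_eq_of_le (hψ0 x) with h | h
    · exact h
    · exfalso
      have hmin : IsLocalMin ψ x := Filter.Eventually.of_forall (fun t => by
        rw [← h]; exact hψ0 t)
      have hvan := vanish_forward hd hψreg hψode' hgψ h.symm hmin.deriv_eq_zero
      have heq : ψ =ᶠ[atTop] (fun _ => (0:ℝ)) :=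
        eventually_atTop.mpr ⟨x, fun t ht => hvan t ht⟩
      have : Tendsto ψ atTop (nhds 0) := by
        rw [tendsto_congr' heq]; exact tendsto_const_nhds
      exact one_ne_zero (tendsto_nhds_unique hψtop this)
  have hφlt1 : ∀ x, φ x < 1 := by
    intro x
    rcases lt_or_eq_of_le (hφ1 x) with h | h
    · exact h
    · exfalso
      have hmax : IsLocalMax φ x := Filter.Eventually.of_forall (fun t => by
        rw [h]; exact hφ1 t)
      have hd2 : deriv (deriv φ) x ≤ 0 := secondDeriv_nonpos_of_isLocalMax hφreg hmax
      have hd1 : deriv φ x = 0 := hmax.deriv_eq_zero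
      have hode := hφode x
      rw [hd1, h] at hode
      nlinarith [hψpos x]
  have hψlt1 : ∀ x, ψ x < 1 := by
    intro x
    rcases lt_or_eq_of_le (hψ1 x) with h | h
    · exact h
    · exfalso
      have hmax : IsLocalMax ψ x := Filter.Eventually.of_forall (fun t => by
        rw [h]; exact hψ1 t)
      have hd2 : deriv (deriv ψ) x ≤ 0 := secondDeriv_nonpos_of_isLocalMax hψreg hmax
      have hd1 : deriv ψ x = 0 := hmax.deriv_eq_zero
      have hode := hψode x
      rw [hd1, h] at hode
      nlinarith [hφpos x, mul_pos hr (hφpos x)]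
  -- extremum inequalities
  have keyMaxψ : ∀ z, IsLocalMax ψ z → b * φ z ≤ 1 - ψ z := by
    intro z hz
    have h1 : deriv ψ z = 0 := hz.deriv_eq_zero
    have h2 : deriv (deriv ψ) z ≤ 0 := secondDeriv_nonpos_of_isLocalMax hψreg hz
    have h3 := hψode z
    rw [h1] at h3
    nlinarith [mul_pos hr (hψpos z), hψpos z]
  have keyMinψ : ∀ z, IsLocalMin ψ z → 1 - ψ z ≤ b * φ z := by
    intro z hz
    have h1 : deriv ψ z = 0 := hz.deriv_eq_zero
    have h2 : 0 ≤ deriv (deriv ψ) z := secondDeriv_nonneg_of_isLocalMin hψreg hz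
    have h3 := hψode z
    rw [h1] at h3
    nlinarith [mul_pos hr (hψpos z), hψpos z]
  have keyMinφ : ∀ z, IsLocalMin φ z → 1 - φ z ≤ a * ψ z := by
    intro z hz
    have h1 : deriv φ z = 0 := hz.deriv_eq_zero
    have h2 : 0 ≤ deriv (deriv φ) z := secondDeriv_nonneg_of_isLocalMin hφreg hz
    have h3 := hφode z
    rw [h1] at h3
    nlinarith [hφpos z]
  have keyMaxφ : ∀ z, IsLocalMax φ z → a * ψ z ≤ 1 - φ z := by
    intro z hz
    have h1 : deriv φ z = 0 := hz.deriv_eq_zero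
    have h2 : deriv (deriv φ) z ≤ 0 := secondDeriv_nonpos_of_isLocalMax hφreg hz
    have h3 := hφode z
    rw [h1] at h3
    nlinarith [hφpos z]
  -- step lemmas
  have stepψ : ∀ p q x y, x < y → p ≤ ψ x → ψ y ≤ q → q < p →
      ∃ x' y', x' < y' ∧ φ x' ≤ (1 - p)/b ∧ (1 - q)/b ≤ φ y' := by
    intro p q x y hxy hpx hyq hqp
    have hyx : ψ y < ψ x := lt_of_le_of_lt hyq (lt_of_lt_of_le hqp hpx)
    obtain ⟨η1, hη1y, hmax, hval⟩ := exists_localMax_left hψc hxy hψbot (hψpos x) hyx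
    obtain ⟨η2, hη12, hmin, hval2⟩ :=
      exists_localMin_right hψc hη1y hψtop (hψlt1 y) (lt_of_lt_of_le hyx hval)
    refine ⟨η1, η2, hη12, ?_, ?_⟩
    · have hk := keyMaxψ η1 hmax
      have hpη : p ≤ ψ η1 := hpx.trans hval
      rw [le_div_iff₀ hb0]
      linarith
    · have hk := keyMinψ η2 hmin
      have hqη : ψ η2 ≤ q := hval2.trans hyq
      rw [div_le_iff₀ hb0]
      linarith
  have stepφ : ∀ q1 p1 x y, x < y → φ x ≤ q1 → p1 ≤ φ y → q1 < p1 →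
      ∃ x' y', x' < y' ∧ (1 - q1)/a ≤ ψ x' ∧ ψ y' ≤ (1 - p1)/a := by
    intro q1 p1 x y hxy hxq hpy hqp
    have hxy' : φ x < φ y := lt_of_le_of_lt hxq (lt_of_lt_of_le hqp hpy)
    obtain ⟨ξ1, hξ1y, hmin, hval⟩ := exists_localMin_left hφc hxy hφbot (hφlt1 x) hxy'
    obtain ⟨ξ2, hξ12, hmax, hval2⟩ :=
      exists_localMax_right hφc hξ1y hφtop (hφpos y) (lt_of_le_of_lt hval hxy')
    refine ⟨ξ1, ξ2, hξ12, ?_, ?_⟩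
    · have hk := keyMinφ ξ1 hmin
      have hqξ : φ ξ1 ≤ q1 := hval.trans hxq
      rw [div_le_iff₀ ha0]
      linarith
    · have hk := keyMaxφ ξ2 hmax
      have hpξ : p1 ≤ φ ξ2 := hpy.trans hval2
      rw [le_div_iff₀ ha0]
      linarith
  -- the amplification map and its expansion property
  obtain ⟨δ, hδdef⟩ : ∃ δ : ℝ, δ = min ((1 - 1/b)/a) (1/a - 1) := ⟨_, rfl⟩
  have hδpos : 0 < δ := by
    rw [hδdef]
    apply lt_min
    · apply div_pos _ ha0
      have : 1/b < 1 := by rw [div_lt_one hb0]; exact hb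
      linarith
    · have : 1 < 1/a := by rw [lt_div_iff₀ ha0]; linarith
      linarith
  have hT : ∀ p : ℝ, 0 ≤ p → p ≤ 1 → p + δ ≤ (1 - (1 - p)/b)/a := by
    intro p h0 h1
    have key : (1 - (1 - p)/b)/a = (b - 1 + p)/(a*b) := by
      field_simp; ring
    rw [key, le_div_iff₀ (by positivity : (0:ℝ) < a*b)]
    have hδ1 : δ ≤ (1 - 1/b)/a := by rw [hδdef]; exact min_le_left _ _
    have hδ2 : δ ≤ 1/a - 1 := by rw [hδdef]; exact min_le_right _ _
    rw [le_div_iff₀ ha0] at hδ1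
    have hδa2 : δ * a ≤ 1 - a := by
      have h' := mul_le_mul_of_nonneg_right hδ2 ha0.le
      have h'' : (1/a - 1) * a = 1 - a := by field_simp
      linarith [h'' ▸ h']
    have hδab : δ * (a*b) ≤ b - 1 := by
      have h' := mul_le_mul_of_nonneg_right hδ1 hb0.le
      have h'' : (1 - 1/b) * b = b - 1 := by field_simp
      nlinarith
    have hδab2 : δ * (a*b) ≤ b - a*b := by
      have h' := mul_le_mul_of_nonneg_right hδa2 hb0.le
      nlinarith
    rcases le_total (a*b) 1 with h | h
    · nlinarith [mul_le_mul_of_nonneg_left h h0]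
    · nlinarith [mul_nonneg (sub_nonneg.mpr h1) (sub_nonneg.mpr h)]
  -- iteration: a strict drop of ψ is impossible
  have noDrop : ∀ p₀ q₀ : ℝ, 0 < p₀ → q₀ < p₀ →
      (∃ x y, x < y ∧ p₀ ≤ ψ x ∧ ψ y ≤ q₀) → False := by
    intro p₀ q₀ hp₀ hq₀ hD
    have main : ∀ n : ℕ, ∃ p q : ℝ, 0 < p ∧ q < p ∧ p₀ + n * δ ≤ p ∧
        (∃ x y, x < y ∧ p ≤ ψ x ∧ ψ y ≤ q) := by
      intro n
      induction n with
      | zero => exact ⟨p₀, q₀, hp₀, hq₀, by simp, hD⟩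
      | succ n ih =>
        obtain ⟨p, q, hp, hqp, hgrow, x, y, hxy, hpx, hyq⟩ := ih
        have hp1 : p ≤ 1 := le_trans hpx (hψ1 x)
        obtain ⟨x', y', hxy', hx', hy'⟩ := stepψ p q x y hxy hpx hyq hqp
        have hlev : (1 - p)/b < (1 - q)/b := by
          apply (div_lt_div_iff_of_pos_right hb0).mpr
          linarith
        obtain ⟨x'', y'', hxy'', hx'', hy''⟩ :=
          stepφ ((1 - p)/b) ((1 - q)/b) x' y' hxy' hx' hy' hlev
        have hTp := hT p hp.le hp1
        refine ⟨(1 - (1 - p)/b)/a, (1 - (1 - q)/b)/a, by linarith, ?_, ?_,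
          x'', y'', hxy'', hx'', hy''⟩
        · apply (div_lt_div_iff_of_pos_right ha0).mpr
          linarith
        · push_cast
          linarith
    obtain ⟨n, hn⟩ := exists_nat_gt ((1 - p₀)/δ)
    obtain ⟨p, q, hp, hqp, hgrow, x, y, hxy, hpx, hyq⟩ := main n
    have hple : p ≤ 1 := le_trans hpx (hψ1 x)
    rw [div_lt_iff₀ hδpos] at hn
    linarith
  -- no strict rise of φ, no strict drop of ψ
  have noRise : ∀ x y, x < y → φ x < φ y → False := by
    intro x y hxy h
    obtain ⟨x', y', hxy', hx', hy'⟩ := stepφ (φ x) (φ y) x y hxy le_rfl le_rfl h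
    have h1 : (1 - φ y)/a < (1 - φ x)/a := by
      apply (div_lt_div_iff_of_pos_right ha0).mpr
      linarith
    exact noDrop ((1 - φ x)/a) ((1 - φ y)/a)
      (div_pos (by linarith [hφlt1 x]) ha0) h1 ⟨x', y', hxy', hx', hy'⟩
  have noDropPt : ∀ x y, x < y → ψ y < ψ x → False := fun x y hxy h =>
    noDrop (ψ x) (ψ y) (hψpos x) h ⟨x, y, hxy, le_rfl, le_rfl⟩
  -- derivative vanishing on constant segments
  have derivZero : ∀ (f : ℝ → ℝ) (u v m : ℝ), u < v → (∀ t ∈ Ioo u v, f t = m) →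
      ∀ s ∈ Ioo u v, deriv f s = 0 := by
    intro f u v m huv hconst s hs
    have hev : f =ᶠ[nhds s] (fun _ => m) :=
      Filter.eventuallyEq_of_mem (isOpen_Ioo.mem_nhds hs) hconst
    rw [hev.deriv_eq, deriv_const]
  have derivDerivZero : ∀ (f : ℝ → ℝ) (u v m : ℝ), u < v → (∀ t ∈ Ioo u v, f t = m) →
      ∀ s ∈ Ioo u v, deriv (deriv f) s = 0 := by
    intro f u v m huv hconst s hs
    have hev : deriv f =ᶠ[nhds s] (fun _ => (0:ℝ)) :=
      Filter.eventuallyEq_of_mem (isOpen_Ioo.mem_nhds hs)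
        (fun t ht => derivZero f u v m huv hconst t ht)
    rw [hev.deriv_eq, deriv_const]
  -- constant segments are impossible
  have constφFalse : ∀ u v : ℝ, u < v → (∀ t ∈ Ioo u v, φ t = φ ((u+v)/2)) → False := by
    intro u v huv hconst
    obtain ⟨m, hm⟩ : ∃ m : ℝ, m = φ ((u+v)/2) := ⟨_, rfl⟩
    have ht0 : (u+v)/2 ∈ Ioo u v := ⟨by linarith, by linarith⟩
    have hm0 : 0 < m := hm ▸ hφpos _
    have hm1 : m < 1 := hm ▸ hφlt1 _
    have hconst' : ∀ t ∈ Ioo u v, φ t = m := fun t ht => hm ▸ hconst t ht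
    have hψval : ∀ s ∈ Ioo u v, ψ s = (1 - m)/a := by
      intro s hs
      have h1 := derivZero φ u v m huv hconst' s hs
      have h2 := derivDerivZero φ u v m huv hconst' s hs
      have h3 := hφode s
      rw [h1, h2, hconst' s hs] at h3
      have h4 : m * (1 - m - a * ψ s) = 0 := by linarith
      have h5 : 1 - m - a * ψ s = 0 := (mul_eq_zero.mp h4).resolve_left (ne_of_gt hm0)
      rw [eq_div_iff (ne_of_gt ha0)]
      linarith
    have h1ψ := derivZero ψ u v ((1-m)/a) huv hψval ((u+v)/2) ht0
    have h2ψ := derivDerivZero ψ u v ((1-m)/a) huv hψval ((u+v)/2) ht0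
    have h3 := hψode ((u+v)/2)
    rw [h1ψ, h2ψ, hψval _ ht0, ← hm] at h3
    have hs0 : (0:ℝ) < (1-m)/a := div_pos (by linarith) ha0
    have h4 : r * ((1-m)/a) * (1 - (1-m)/a - b * m) = 0 := by linarith
    have h5 : 1 - (1-m)/a - b * m = 0 :=
      (mul_eq_zero.mp h4).resolve_left (ne_of_gt (mul_pos hr hs0))
    have hfrac : (1-m)/a = 1 - b * m := by linarith
    rw [div_eq_iff (ne_of_gt ha0)] at hfrac
    nlinarith [mul_pos (mul_pos ha0 hm0) (sub_pos.mpr hb),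
      mul_pos (sub_pos.mpr ha1) (sub_pos.mpr hm1)]
  have constψFalse : ∀ u v : ℝ, u < v → (∀ t ∈ Ioo u v, ψ t = ψ ((u+v)/2)) → False := by
    intro u v huv hconst
    obtain ⟨m, hm⟩ : ∃ m : ℝ, m = ψ ((u+v)/2) := ⟨_, rfl⟩
    have ht0 : (u+v)/2 ∈ Ioo u v := ⟨by linarith, by linarith⟩
    have hm0 : 0 < m := hm ▸ hψpos _
    have hm1 : m < 1 := hm ▸ hψlt1 _
    have hconst' : ∀ t ∈ Ioo u v, ψ t = m := fun t ht => hm ▸ hconst t ht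
    have hφval : ∀ s ∈ Ioo u v, φ s = (1 - m)/b := by
      intro s hs
      have h1 := derivZero ψ u v m huv hconst' s hs
      have h2 := derivDerivZero ψ u v m huv hconst' s hs
      have h3 := hψode s
      rw [h1, h2, hconst' s hs] at h3
      have h4 : r * m * (1 - m - b * φ s) = 0 := by linarith
      have h5 : 1 - m - b * φ s = 0 :=
        (mul_eq_zero.mp h4).resolve_left (ne_of_gt (mul_pos hr hm0))
      rw [eq_div_iff (ne_of_gt hb0)]
      linarith
    have h1φ := derivZero φ u v ((1-m)/b) huv hφval ((u+v)/2) ht0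
    have h2φ := derivDerivZero φ u v ((1-m)/b) huv hφval ((u+v)/2) ht0
    have h3 := hφode ((u+v)/2)
    rw [h1φ, h2φ, hφval _ ht0, ← hm] at h3
    have hs0 : (0:ℝ) < (1-m)/b := div_pos (by linarith) hb0
    have h4 : (1-m)/b * (1 - (1-m)/b - a * m) = 0 := by linarith
    have h5 : 1 - (1-m)/b - a * m = 0 :=
      (mul_eq_zero.mp h4).resolve_left (ne_of_gt hs0)
    have hfrac : (1-m)/b = 1 - a * m := by linarith
    rw [div_eq_iff (ne_of_gt hb0)] at hfrac
    nlinarith [mul_pos (sub_pos.mpr hb) (sub_pos.mpr hm1),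
      mul_pos (mul_pos hb0 hm0) (sub_pos.mpr ha1)]
  -- assembly
  constructor
  · intro x y hxy
    by_contra h
    push_neg at h
    rcases lt_or_eq_of_le h with h' | h'
    · exact noRise x y hxy h'
    · by_cases hw : ∃ w ∈ Ioo x y, φ w ≠ φ x
      · obtain ⟨w, hw1, hw2⟩ := hw
        rcases lt_or_gt_of_ne hw2 with h'' | h''
        · exact noRise w y hw1.2 (by rw [← h']; exact h'')
        · exact noRise x w hw1.1 h''
      · push_neg at hw
        apply constφFalse x y hxy
        intro t ht
        rw [hw t ht, hw ((x+y)/2) ⟨by linarith [hxy], by linarith [hxy]⟩]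
  · intro x y hxy
    by_contra h
    push_neg at h
    rcases lt_or_eq_of_le h with h' | h'
    · exact noDropPt x y hxy h'
    · by_cases hw : ∃ w ∈ Ioo x y, ψ w ≠ ψ y
      · obtain ⟨w, hw1, hw2⟩ := hw
        rcases lt_or_gt_of_ne hw2 with h'' | h''
        · exact noDropPt x w hw1.1 (by rw [← h']; exact h'')
        · exact noDropPt w y hw1.2 h''
      · push_neg at hw
        apply constψFalse x y hxy
        intro t ht
        rw [hw t ht, hw ((x+y)/2) ⟨by linarith [hxy], by linarith [hxy]⟩]
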